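/- arXiv:1501.00875 — 2 statements merged into one kernel-verified Lean document; each statement's English description precedes it below -/
import Mathlib

section
/- For a Radon probability measure μ on ℝ^d, the lower Hausdorff dimension dim_* μ (the essential infimum over μ of the lower local dimension) equals the infimum of Hausdorff dimensions of Borel sets of positive μ-measure: dim_* μ = inf{dim_H A : μ(A) > 0}. -/
open MeasureTheory Set Filter

/-- The lower local dimension of a measure at a point:
`liminf_{r→0⁺} log μ(B(x,r)) / log r`. -/
noncomputable def lowerLocalDim {d : ℕ} (μ : Measure (EuclideanSpace ℝ (Fin d)))
    (x : EuclideanSpace ℝ (Fin d)) : ℝ :=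
  liminf (fun r : ℝ => Real.log (μ (Metric.ball x r)).toReal / Real.log r) (nhdsWithin 0 (Ioi 0))

/-- The lower Hausdorff dimension of a measure: the essential infimum over `μ`
of the lower local dimension, expressed as the supremum of `s` such that the
lower local dimension is at least `s` almost everywhere. -/
noncomputable def dimStar {d : ℕ} (μ : Measure (EuclideanSpace ℝ (Fin d))) : ℝ :=
  sSup {s : ℝ | ∀ᵐ x ∂μ, s ≤ lowerLocalDim μ x}

section Aux

open Metric
open scoped ENNReal NNReal Topology

namespace DimStarAux

variable {X : Type*} [MetricSpace X] [MeasurableSpace X] [OpensMeasurableSpace X]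

lemma measurable_measure_ball' (μ : Measure X) (q : ℝ) :
    Measurable fun x => μ (Metric.ball x q) := by
  have lsc : LowerSemicontinuous fun x => μ (Metric.ball x q) := by
    intro x c hc
    rcases le_or_gt q 0 with hq | hq
    · simp [Metric.ball_eq_empty.2 hq] at hc
    have hU : Metric.ball x q = ⋃ n : ℕ, Metric.ball x (q - q / (n + 2)) := by
      ext y; simp only [mem_ball, mem_iUnion]
      constructor
      · intro hy
        obtain ⟨n, hn⟩ := exists_nat_gt (q / (q - dist y x))
        refine ⟨n, ?_⟩
        have h1 : 0 < q - dist y x := by linarith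
        have h2 : q / (q - dist y x) < n + 2 := by
          have : (n : ℝ) ≤ n + 2 := by linarith
          linarith
        have h3 : q / (n + 2 : ℝ) < q - dist y x := by
          rw [div_lt_iff₀ (by positivity)] at h2 ⊢
          nlinarith
        linarith
      · rintro ⟨n, hn⟩
        have : 0 < q / (n + 2 : ℝ) := by positivity
        linarith
    have hmono : Monotone fun n : ℕ => Metric.ball x (q - q / (n + 2)) := by
      intro m n hmn
      apply Metric.ball_subset_ball
      have : q / (n + 2 : ℝ) ≤ q / (m + 2 : ℝ) := by
        apply div_le_div_of_nonneg_left hq.le (by positivity)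
        exact_mod_cast by omega
      linarith
    simp only [] at hc
    rw [hU, hmono.directed_le.measure_iUnion] at hc
    obtain ⟨n, hn⟩ := lt_iSup_iff.1 hc
    have hpos : 0 < q / (n + 2 : ℝ) := by positivity
    filter_upwards [Metric.ball_mem_nhds x hpos] with y hy
    calc c < μ (Metric.ball x (q - q / (n + 2))) := hn
      _ ≤ μ (Metric.ball y q) := by
          apply measure_mono
          intro z hz
          simp only [mem_ball] at *
          calc dist z y ≤ dist z x + dist x y := dist_triangle z x y
            _ < (q - q / (n+2)) + q / (n+2) := by
                have : dist x y < q / (n+2) := by rwa [dist_comm]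
                linarith [hz]
            _ = q := by ring
  exact lsc.measurable

variable {d : ℕ}
local notation "E" => EuclideanSpace ℝ (Fin d)

variable (μ : Measure (EuclideanSpace ℝ (Fin d))) [IsProbabilityMeasure μ]
  (x : EuclideanSpace ℝ (Fin d))

/-- abbreviation for the quotient function -/
noncomputable def f (r : ℝ) : ℝ := Real.log (μ (Metric.ball x r)).toReal / Real.log r

/-- the set whose sSup is the liminf -/
def L : Set ℝ := {a | ∀ᶠ r in nhdsWithin (0:ℝ) (Ioi 0), a ≤ f μ x r}

omit [IsProbabilityMeasure μ] in
lemma lld_eq : lowerLocalDim μ x = sSup (L μ x) := liminf_eq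

lemma eventually_basic : ∀ᶠ r in nhdsWithin (0:ℝ) (Ioi 0), r ∈ Ioo (0:ℝ) 1 ∧ 0 ≤ f μ x r := by
  filter_upwards [Ioo_mem_nhdsGT (by norm_num : (0:ℝ) < 1)]
    with r hr
  refine ⟨hr, ?_⟩
  have h1 : Real.log (μ (Metric.ball x r)).toReal ≤ 0 := by
    apply Real.log_nonpos (ENNReal.toReal_nonneg)
    exact ENNReal.toReal_le_of_le_ofReal one_pos.le (by simpa using prob_le_one)
  have h2 : Real.log r < 0 := Real.log_neg hr.1 hr.2
  exact div_nonneg_iff.2 (Or.inr ⟨h1, h2.le⟩)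

lemma zero_mem_L : (0:ℝ) ∈ L μ x := by
  filter_upwards [eventually_basic μ x] with r hr using hr.2

lemma lld_nonneg : 0 ≤ lowerLocalDim μ x := by
  rw [lld_eq]
  by_cases hb : BddAbove (L μ x)
  · exact le_csSup hb (zero_mem_L μ x)
  · rw [Real.sSup_of_not_bddAbove hb]

lemma exists_gt_mem_L {t : ℝ} (h : t < lowerLocalDim μ x) : ∃ a, t < a ∧ a ∈ L μ x := by
  rw [lld_eq] at h
  by_cases hb : BddAbove (L μ x)
  · obtain ⟨a, ha, hta⟩ := exists_lt_of_lt_csSup ⟨0, zero_mem_L μ x⟩ h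
    exact ⟨a, hta, ha⟩
  · obtain ⟨a, ha, hta⟩ := not_bddAbove_iff.1 hb t
    exact ⟨a, hta, ha⟩

omit [IsProbabilityMeasure μ] in
lemma le_lld_of_mem_L {a : ℝ} (hb : BddAbove (L μ x)) (ha : a ∈ L μ x) :
    a ≤ lowerLocalDim μ x := by
  rw [lld_eq]; exact le_csSup hb ha

lemma ball_le_rpow {r t : ℝ} (hr : r ∈ Ioo (0:ℝ) 1) (h : t ≤ f μ x r) :
    μ (Metric.ball x r) ≤ ENNReal.ofReal (r ^ t) := by
  set m := (μ (Metric.ball x r)).toReal with hm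
  rcases eq_or_lt_of_le (show (0:ℝ≥0∞) ≤ μ (Metric.ball x r) from zero_le) with h0 | h0
  · rw [← h0]; exact zero_le
  have hmpos : 0 < m := ENNReal.toReal_pos h0.ne' (measure_ne_top μ _)
  have hlogr : Real.log r < 0 := Real.log_neg hr.1 hr.2
  have h1 : Real.log m ≤ t * Real.log r := by
    rw [f, ← hm] at h
    have := mul_le_mul_of_nonpos_right h hlogr.le
    rwa [div_mul_cancel₀ _ hlogr.ne] at this
  have h2 : Real.log m ≤ Real.log (r ^ t) := by rwa [Real.log_rpow hr.1]
  have h3 : m ≤ r ^ t := (Real.log_le_log_iff hmpos (Real.rpow_pos_of_pos hr.1 t)).1 h2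
  calc μ (Metric.ball x r) = ENNReal.ofReal m := (ENNReal.ofReal_toReal (measure_ne_top μ _)).symm
    _ ≤ ENNReal.ofReal (r ^ t) := ENNReal.ofReal_le_ofReal h3

/-- From `t < lowerLocalDim`, eventual ball bound with exponent `t`. -/
lemma eventually_ball_le {t : ℝ} (h : t < lowerLocalDim μ x) :
    ∀ᶠ r in nhdsWithin (0:ℝ) (Ioi 0), μ (Metric.ball x r) ≤ ENNReal.ofReal (r ^ t) := by
  obtain ⟨a, hta, ha⟩ := exists_gt_mem_L μ x h
  filter_upwards [ha, eventually_basic μ x] with r har hbasic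
  calc μ (Metric.ball x r) ≤ ENNReal.ofReal (r ^ a) :=
        ball_le_rpow μ x hbasic.1 har
    _ ≤ ENNReal.ofReal (r ^ t) := by
        apply ENNReal.ofReal_le_ofReal
        exact Real.rpow_le_rpow_of_exponent_ge hbasic.1.1 hbasic.1.2.le hta.le

/-- the measurable "thin at scales below `1/(n+1)`" set -/
def good (t : ℝ) (n : ℕ) : Set E :=
  {x | ∀ q : ℚ, 0 < (q:ℝ) → (q:ℝ) < 1/(n+1) →
    μ (Metric.ball x (q:ℝ)) ≤ ENNReal.ofReal ((q:ℝ) ^ t)}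

omit [IsProbabilityMeasure μ] in
lemma measurable_good (t : ℝ) (n : ℕ) : MeasurableSet (good μ t n) := by
  have : good μ t n = ⋂ (q : ℚ), ⋂ (_ : 0 < (q:ℝ)), ⋂ (_ : (q:ℝ) < 1/(n+1)),
      {x : E | μ (Metric.ball x (q:ℝ)) ≤ ENNReal.ofReal ((q:ℝ) ^ t)} := by
    ext x; simp [good, mem_iInter]
  rw [this]
  refine MeasurableSet.iInter fun q => MeasurableSet.iInter fun _ =>
    MeasurableSet.iInter fun _ => ?_
  exact measurable_measure_ball' μ (q:ℝ) measurableSet_Iic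

omit [IsProbabilityMeasure μ] in
/-- an eventual ball bound puts `x` in some `good` set -/
lemma mem_good_of_eventually {t : ℝ} {x : E}
    (h : ∀ᶠ r in nhdsWithin (0:ℝ) (Ioi 0), μ (Metric.ball x r) ≤ ENNReal.ofReal (r ^ t)) :
    ∃ n : ℕ, x ∈ good μ t n := by
  rw [eventually_nhdsWithin_iff, Metric.eventually_nhds_iff] at h
  obtain ⟨ε, hε, hball⟩ := h
  obtain ⟨n, hn⟩ := exists_nat_one_div_lt hε
  refine ⟨n, fun q hq1 hq2 => ?_⟩
  refine hball ?_ hq1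
  rw [Real.dist_eq, sub_zero, abs_of_pos hq1]
  exact hq2.trans hn

lemma mass_distribution {t : ℝ} (ht : 0 < t)
    {A : Set E} (hA : MeasurableSet A) (n : ℕ)
    (h : ∀ x ∈ A, ∀ q : ℚ, 0 < (q:ℝ) → (q:ℝ) < 1/(n+1) →
      μ (Metric.ball x (q:ℝ)) ≤ ENNReal.ofReal ((q:ℝ) ^ t)) :
    μ A ≤ ENNReal.ofReal (2 ^ t) * μH[t] A := by
  set c : ℝ≥0∞ := ENNReal.ofReal (2 ^ t) with hc
  have hc0 : c ≠ 0 := by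
    simp only [hc, ne_eq, ENNReal.ofReal_eq_zero, not_le]
    positivity
  have hctop : c ≠ ∞ := ENNReal.ofReal_ne_top
  have hsing : ∀ x ∈ A, μ {x} = 0 := by
    intro x hx
    have hq : ∀ k : ℕ, μ {x} ≤ ENNReal.ofReal (((1:ℝ)/((n+2)*(k+1))) ^ t) := by
      intro k
      set q : ℚ := 1/((n+2)*(k+1)) with hqdef
      have hqpos : 0 < (q:ℝ) := by push_cast; positivity
      have hqcast : (q:ℝ) = 1/((n+2)*(k+1)) := by rw [hqdef]; push_cast; ring
      have hqlt : (q:ℝ) < 1/(n+1) := by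
        rw [hqcast, div_lt_div_iff₀ (by positivity) (by positivity)]
        nlinarith [Nat.cast_nonneg (α := ℝ) n, Nat.cast_nonneg (α := ℝ) k]
      have := h x hx q hqpos hqlt
      have hxq : μ {x} ≤ μ (Metric.ball x (q:ℝ)) :=
        measure_mono (by simp [Metric.mem_ball, hqpos])
      refine (hxq.trans this).trans_eq ?_
      rw [hqcast]
    have hlim : Tendsto (fun k : ℕ => ENNReal.ofReal (((1:ℝ)/((n+2)*(k+1))) ^ t)) atTop (𝓝 0) := by
      have h1 : Tendsto (fun k : ℕ => (1:ℝ)/((n+2)*(k+1))) atTop (𝓝 0) := by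
        simp only [one_div]
        apply Tendsto.comp tendsto_inv_atTop_zero
        apply Filter.Tendsto.const_mul_atTop (by positivity : (0:ℝ) < n+2)
        exact tendsto_atTop_add_const_right _ _ tendsto_natCast_atTop_atTop
      have h2 : Tendsto (fun k : ℕ => ((1:ℝ)/((n+2)*(k+1))) ^ t) atTop (𝓝 0) := by
        have := h1.rpow_const (p := t) (Or.inr ht.le)
        rwa [Real.zero_rpow ht.ne'] at this
      have := (ENNReal.continuous_ofReal.tendsto 0).comp h2
      rwa [ENNReal.ofReal_zero] at this
    simpa using ge_of_tendsto hlim (Eventually.of_forall hq)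
  have key : c⁻¹ • μ.restrict A ≤ μH[t] := by
    apply MeasureTheory.Measure.le_hausdorffMeasure t _ (ENNReal.ofReal (1/(2*(n+1))))
      (by simp; positivity)
    intro s hs
    rw [Measure.smul_apply, smul_eq_mul, Measure.restrict_apply' hA]
    rcases eq_empty_or_nonempty (s ∩ A) with hemp | ⟨x, hx⟩
    · simp [hemp]
    have hdne : EMetric.diam s ≠ ∞ :=
      (hs.trans_lt ENNReal.ofReal_lt_top).ne
    set D := (EMetric.diam s).toReal with hD
    have hDnn : 0 ≤ D := ENNReal.toReal_nonneg
    have hDlt : D < 1/(n+1) := by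
      have := ENNReal.toReal_mono ENNReal.ofReal_ne_top hs
      rw [ENNReal.toReal_ofReal (by positivity)] at this
      calc D ≤ 1/(2*(n+1)) := this
        _ < 1/(n+1) := by
          rw [div_lt_div_iff₀ (by positivity) (by positivity)]; nlinarith [Nat.cast_nonneg (α := ℝ) n]
    rcases eq_or_lt_of_le hDnn with hD0 | hD0
    · -- diam = 0 : s is a subsingleton
      have hss : s ⊆ {x} := by
        intro y hy
        have hb : Bornology.IsBounded s := Metric.isBounded_iff_ediam_ne_top.2 hdne
        have := Metric.dist_le_diam_of_mem hb hy hx.1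
        change dist y x ≤ D at this; rw [← hD0] at this
        simpa [dist_eq_zero] using le_antisymm this dist_nonneg
      have : μ (s ∩ A) = 0 :=
        measure_mono_null (inter_subset_left.trans hss) (by simpa using hsing x hx.2)
      simp [this]
    · -- main case: 0 < D
      obtain ⟨q, hq1, hq2⟩ := exists_rat_btwn (lt_min (by linarith : D < 2*D) hDlt)
      have hq2' : (q:ℝ) < 2*D := hq2.trans_le (min_le_left _ _)
      have hq2'' : (q:ℝ) < 1/(n+1) := hq2.trans_le (min_le_right _ _)
      have hqpos : 0 < (q:ℝ) := hD0.trans hq1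
      have hsub : s ⊆ Metric.ball x (q:ℝ) := by
        intro y hy
        have hb : Bornology.IsBounded s := Metric.isBounded_iff_ediam_ne_top.2 hdne
        have := Metric.dist_le_diam_of_mem hb hy hx.1
        change dist y x ≤ D at this
        exact Metric.mem_ball.2 (this.trans_lt hq1)
      have hb1 : μ (s ∩ A) ≤ ENNReal.ofReal ((q:ℝ) ^ t) :=
        (measure_mono (inter_subset_left.trans hsub)).trans (h x hx.2 q hqpos hq2'')
      have hb2 : ENNReal.ofReal ((q:ℝ) ^ t) ≤ c * EMetric.diam s ^ t := by
        have h1 : (q:ℝ) ^ t ≤ (2*D) ^ t :=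
          Real.rpow_le_rpow hqpos.le hq2'.le ht.le
        have h2 : ((2:ℝ)*D) ^ t = 2 ^ t * D ^ t := Real.mul_rpow (by norm_num) hDnn
        have h3 : EMetric.diam s = ENNReal.ofReal D := (ENNReal.ofReal_toReal hdne).symm
        calc ENNReal.ofReal ((q:ℝ) ^ t) ≤ ENNReal.ofReal (2 ^ t * D ^ t) := by
              apply ENNReal.ofReal_le_ofReal; rw [← h2]; exact h1
          _ = c * ENNReal.ofReal (D ^ t) := ENNReal.ofReal_mul (by positivity)
          _ = c * EMetric.diam s ^ t := by
              rw [h3, ← ENNReal.ofReal_rpow_of_pos hD0]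
      calc c⁻¹ * μ (s ∩ A) ≤ c⁻¹ * (c * EMetric.diam s ^ t) := by
            exact mul_le_mul_right (hb1.trans hb2) _
        _ = EMetric.diam s ^ t := by
            rw [← mul_assoc, ENNReal.inv_mul_cancel hc0 hctop, one_mul]
  have := Measure.le_iff'.1 key A
  rw [Measure.smul_apply, smul_eq_mul, Measure.restrict_apply' hA, inter_self] at this
  calc μ A = c * (c⁻¹ * μ A) := by
        rw [← mul_assoc, ENNReal.mul_inv_cancel hc0 hctop, one_mul]
    _ ≤ c * μH[t] A := mul_le_mul_right this _

lemma dimH_le_of_freq {t : ℝ} (ht : 0 < t)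
    {A : Set E}
    (h : ∀ x ∈ A, ∀ n : ℕ, ∃ q : ℚ, 0 < (q:ℝ) ∧ (q:ℝ) < 1/(n+1) ∧
      ENNReal.ofReal ((q:ℝ) ^ t) ≤ μ (Metric.ball x (q:ℝ))) :
    dimH A ≤ ENNReal.ofReal t := by
  have main : ∀ t' : ℝ, t < t' → μH[t'] A = 0 := by
    intro t' htt'
    choose! q hq1 hq2 hq3 using h
    set r : ℕ → E → ℝ := fun n x => ((q x n : ℝ)) with hr
    have V : ∀ n : ℕ, ∃ u : Set E, u ⊆ A ∧
        (u.PairwiseDisjoint fun a => Metric.closedBall a (r n a)) ∧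
        A ⊆ ⋃ b ∈ u, Metric.closedBall b (4 * r n b) := by
      intro n
      obtain ⟨u, huA, hdisj, hcov⟩ :=
        Vitali.exists_disjoint_subfamily_covering_enlargement_closedBall A
          (id) (r n) (1/(n+1)) (fun a ha => (hq2 a ha n).le) 4 (by norm_num)
      refine ⟨u, huA, by simpa using hdisj, ?_⟩
      intro a ha
      obtain ⟨b, hb, hsub⟩ := hcov a ha
      simp only [id] at hsub
      exact mem_biUnion hb (hsub (Metric.mem_closedBall_self (hq1 a ha n).le))
    choose u hu1 hu2 hu3 using V
    have hposball : ∀ n, ∀ b ∈ u n, (0:ℝ≥0∞) < μ (Metric.closedBall b (r n b)) := by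
      intro n b hb
      calc (0:ℝ≥0∞) < ENNReal.ofReal ((r n b) ^ t) := by
            simp only [ENNReal.ofReal_pos]
            exact Real.rpow_pos_of_pos (hq1 b (hu1 n hb) n) t
        _ ≤ μ (Metric.ball b (r n b)) := hq3 b (hu1 n hb) n
        _ ≤ μ (Metric.closedBall b (r n b)) := measure_mono Metric.ball_subset_closedBall
    have hcnt : ∀ n, (u n).Countable := by
      intro n
      have := MeasureTheory.Measure.countable_meas_pos_of_disjoint_of_meas_iUnion_ne_top
        (ι := ↥(u n)) μ (As := fun b => Metric.closedBall (b:E) (r n b))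
        (fun b => measurableSet_closedBall)
        (fun i j hij => hu2 n i.2 j.2 (Subtype.coe_injective.ne hij))
        (ne_top_of_le_ne_top (measure_ne_top μ univ) (measure_mono (subset_univ _)))
      have heq : {i : ↥(u n) | 0 < μ (Metric.closedBall (i:E) (r n i))} = univ := by
        ext i; simpa using hposball n i i.2
      rw [heq, Set.countable_univ_iff] at this
      exact (Set.countable_coe_iff).1 this
    haveI : ∀ n, Countable ↥(u n) := fun n => (hcnt n).to_subtype
    have hle := MeasureTheory.Measure.hausdorffMeasure_le_liminf_tsum (ι := fun n => ↥(u n)) t' A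
      (l := atTop) (fun n => ENNReal.ofReal (8/(n+1)))
      (by
        have h1 : Tendsto (fun n : ℕ => (8:ℝ)/(n+1)) atTop (𝓝 0) := by
          simp only [div_eq_mul_inv]
          rw [show (𝓝 (0:ℝ)) = 𝓝 (8 * 0) by norm_num]
          apply Tendsto.const_mul
          exact tendsto_inv_atTop_zero.comp (tendsto_atTop_add_const_right _ _
            tendsto_natCast_atTop_atTop)
        have := (ENNReal.continuous_ofReal.tendsto 0).comp h1
        rwa [ENNReal.ofReal_zero] at this)
      (fun n i => Metric.closedBall (i:E) (4 * r n i))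
      (by
        apply Eventually.of_forall
        intro n i
        have hrpos : 0 < r n i := hq1 (i:E) (hu1 n i.2) n
        have h0 : (0:ℝ) ≤ 4 * r n i := by linarith
        calc EMetric.diam (Metric.closedBall (i:E) (4 * r n i))
            ≤ 2 * ENNReal.ofReal (4 * r n i) := by
              rw [← Metric.emetric_closedBall h0]
              exact EMetric.diam_closedBall
          _ = ENNReal.ofReal (8 * r n i) := by
              rw [← ENNReal.ofReal_ofNat, ← ENNReal.ofReal_mul (by norm_num)]
              norm_num; ring_nf
          _ ≤ ENNReal.ofReal (8/(n+1)) := by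
              apply ENNReal.ofReal_le_ofReal
              have h5 := (hq2 (i:E) (hu1 n i.2) n).le
              rw [div_eq_mul_inv, one_mul] at h5
              rw [div_eq_mul_inv]
              exact mul_le_mul_of_nonneg_left h5 (by norm_num))
      (by
        apply Eventually.of_forall
        intro n
        intro a ha
        have := hu3 n ha
        simp only [mem_iUnion, exists_prop] at this
        obtain ⟨b, hb, hab⟩ := this
        exact mem_iUnion.2 ⟨⟨b, hb⟩, hab⟩)
    rw [← le_zero_iff]
    refine hle.trans ?_
    have hbound : ∀ n : ℕ, (∑' i : ↥(u n), EMetric.diam (Metric.closedBall (i:E) (4 * r n i)) ^ t')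
        ≤ ENNReal.ofReal (8 ^ t' * (1/(n+1)) ^ (t'-t)) := by
      intro n
      set K := ENNReal.ofReal ((8:ℝ) ^ t' * (1/(n+1)) ^ (t'-t)) with hK
      have hterm : ∀ i : ↥(u n), EMetric.diam (Metric.closedBall (i:E) (4 * r n i)) ^ t'
          ≤ K * μ (Metric.closedBall (i:E) (r n i)) := by
        intro i
        have hrpos : 0 < r n i := hq1 (i:E) (hu1 n i.2) n
        have hrlt : r n i < 1/(n+1) := hq2 (i:E) (hu1 n i.2) n
        have h0 : (0:ℝ) ≤ 4 * r n i := by positivity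
        have hd1 : EMetric.diam (Metric.closedBall (i:E) (4 * r n i))
            ≤ ENNReal.ofReal (8 * r n i) := by
          rw [← Metric.emetric_closedBall h0]
          refine EMetric.diam_closedBall.trans_eq ?_
          rw [← ENNReal.ofReal_ofNat, ← ENNReal.ofReal_mul (by norm_num)]
          norm_num; ring_nf
        calc EMetric.diam (Metric.closedBall (i:E) (4 * r n i)) ^ t'
            ≤ ENNReal.ofReal (8 * r n i) ^ t' := by
              exact ENNReal.rpow_le_rpow hd1 (by linarith)
          _ = ENNReal.ofReal ((8 * r n i) ^ t') := by
              rw [← ENNReal.ofReal_rpow_of_pos (by positivity)]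
          _ ≤ K * ENNReal.ofReal ((r n i) ^ t) := by
              rw [hK, ← ENNReal.ofReal_mul (by positivity)]
              apply ENNReal.ofReal_le_ofReal
              have e1 : (8 * r n i) ^ t' = 8 ^ t' * (r n i) ^ t' :=
                Real.mul_rpow (by norm_num) hrpos.le
              have e2 : (r n i) ^ t' = (r n i) ^ (t'-t) * (r n i) ^ t := by
                rw [← Real.rpow_add hrpos]; ring_nf
              have e3 : (r n i) ^ (t'-t) ≤ (1/(n+1)) ^ (t'-t) :=
                Real.rpow_le_rpow hrpos.le hrlt.le (by linarith)
              calc (8 * r n i) ^ t' = 8 ^ t' * ((r n i) ^ (t'-t) * (r n i) ^ t) := by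
                    rw [e1, ← e2]
                _ ≤ 8 ^ t' * ((1/(n+1)) ^ (t'-t) * (r n i) ^ t) := by
                    apply mul_le_mul_of_nonneg_left _ (by positivity)
                    apply mul_le_mul_of_nonneg_right e3 (by positivity)
                _ = 8 ^ t' * (1/(n+1)) ^ (t'-t) * (r n i) ^ t := by ring
          _ ≤ K * μ (Metric.closedBall (i:E) (r n i)) := by
              apply mul_le_mul_right
              exact ((hq3 (i:E) (hu1 n i.2) n).trans
                (measure_mono Metric.ball_subset_closedBall))
      calc (∑' i : ↥(u n), EMetric.diam (Metric.closedBall (i:E) (4 * r n i)) ^ t')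
          ≤ ∑' i : ↥(u n), K * μ (Metric.closedBall (i:E) (r n i)) :=
            ENNReal.tsum_le_tsum hterm
        _ = K * ∑' i : ↥(u n), μ (Metric.closedBall (i:E) (r n i)) := ENNReal.tsum_mul_left
        _ ≤ K * μ univ := by
            apply mul_le_mul_right
            exact tsum_measure_le_measure_univ
              (fun i => (measurableSet_closedBall).nullMeasurableSet)
              (fun i j hij => ((hu2 n i.2 j.2 (Subtype.coe_injective.ne hij))).aedisjoint)
        _ = K := by rw [measure_univ, mul_one]
    have hKlim : Tendsto (fun n : ℕ => ENNReal.ofReal ((8:ℝ) ^ t' * (1/(n+1)) ^ (t'-t)))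
        atTop (𝓝 0) := by
      have h1 : Tendsto (fun n : ℕ => (1:ℝ)/(n+1)) atTop (𝓝 0) := by
        simp only [one_div]
        exact tendsto_inv_atTop_zero.comp (tendsto_atTop_add_const_right _ _
          tendsto_natCast_atTop_atTop)
      have h2 : Tendsto (fun n : ℕ => ((1:ℝ)/(n+1)) ^ (t'-t)) atTop (𝓝 0) := by
        have := h1.rpow_const (p := t'-t) (Or.inr (by linarith))
        rwa [Real.zero_rpow (by linarith : t'-t ≠ 0)] at this
      have h3 : Tendsto (fun n : ℕ => (8:ℝ) ^ t' * ((1:ℝ)/(n+1)) ^ (t'-t)) atTop (𝓝 0) := by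
        have := h2.const_mul ((8:ℝ) ^ t')
        rwa [mul_zero] at this
      have := (ENNReal.continuous_ofReal.tendsto 0).comp h3
      rwa [ENNReal.ofReal_zero] at this
    calc liminf (fun n : ℕ => ∑' i : ↥(u n),
          EMetric.diam (Metric.closedBall (i:E) (4 * r n i)) ^ t') atTop
        ≤ liminf (fun n : ℕ => ENNReal.ofReal ((8:ℝ) ^ t' * (1/(n+1)) ^ (t'-t))) atTop :=
          liminf_le_liminf (Eventually.of_forall hbound)
      _ = 0 := hKlim.liminf_eq
  -- conclude dimH ≤ ofReal t
  apply dimH_le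
  intro d' hd'
  by_contra hcon
  push_neg at hcon
  have h1 : t < (d':ℝ) := by
    by_contra h2
    push_neg at h2
    have : (↑d' : ℝ≥0∞) ≤ ENNReal.ofReal t := by
      rw [← ENNReal.ofReal_coe_nnreal]
      exact ENNReal.ofReal_le_ofReal h2
    exact absurd this (not_le.2 hcon)
  rw [main (d':ℝ) h1] at hd'
  simp at hd'


lemma dimH_le_finrank (A : Set E) : dimH A ≤ (d : ℝ≥0∞) := by
  refine (dimH_mono (subset_univ A)).trans ?_
  rw [Real.dimH_univ_eq_finrank (EuclideanSpace ℝ (Fin d))]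
  simp [finrank_euclideanSpace_fin]

lemma dimH_ne_top (A : Set E) : dimH A ≠ ∞ :=
  ((dimH_le_finrank A).trans_lt (by simp : (d : ℝ≥0∞) < ∞)).ne

/-- Part (a): any `s` with a.e. lower local dimension `≥ s` is a lower bound for
dimensions of positive-measure sets. -/
lemma partA {s : ℝ} (hs : ∀ᵐ x ∂μ, s ≤ lowerLocalDim μ x) {A : Set E}
    (hA : MeasurableSet A) (hApos : 0 < μ A) : s ≤ (dimH A).toReal := by
  rcases le_or_gt s 0 with hs0 | hs0
  · exact hs0.trans ENNReal.toReal_nonneg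
  by_contra hcon
  push_neg at hcon
  obtain ⟨t, ht1, ht2⟩ := exists_between hcon
  have htpos : 0 < t := lt_of_le_of_lt ENNReal.toReal_nonneg ht1
  have hae : ∀ᵐ x ∂μ, ∃ n : ℕ, x ∈ good μ t n := by
    filter_upwards [hs] with x hx
    exact mem_good_of_eventually μ (eventually_ball_le μ x (ht2.trans_le hx))
  have hsub : A ≤ᵐ[μ] ⋃ n : ℕ, (A ∩ good μ t n) := by
    filter_upwards [hae] with x hx hxA
    obtain ⟨n, hn⟩ := hx
    exact mem_iUnion.2 ⟨n, hxA, hn⟩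
  have hpos : 0 < μ (⋃ n : ℕ, (A ∩ good μ t n)) :=
    lt_of_lt_of_le hApos (measure_mono_ae hsub)
  have hex : ∃ n : ℕ, μ (A ∩ good μ t n) ≠ 0 := by
    by_contra hno
    push_neg at hno
    exact absurd (measure_iUnion_null hno) hpos.ne'
  obtain ⟨n, hn⟩ := hex
  have hmass := mass_distribution μ htpos (hA.inter (measurable_good μ t n)) n
    (fun x hx q hq1 hq2 => hx.2 q hq1 hq2)
  have hHne : μH[t] (A ∩ good μ t n) ≠ 0 := by
    intro h0
    rw [h0, mul_zero] at hmass
    exact hn (le_antisymm hmass zero_le)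
  have hdim : (↑(t.toNNReal) : ℝ≥0∞) ≤ dimH (A ∩ good μ t n) := by
    apply le_dimH_of_hausdorffMeasure_ne_zero
    rwa [show ((t.toNNReal : ℝ)) = t from Real.coe_toNNReal t htpos.le]
  have hdim2 : (↑(t.toNNReal) : ℝ≥0∞) ≤ dimH A := hdim.trans (dimH_mono inter_subset_left)
  have : t ≤ (dimH A).toReal := by
    have := ENNReal.toReal_mono (dimH_ne_top A) hdim2
    rwa [ENNReal.coe_toReal, Real.coe_toNNReal t htpos.le] at this
  linarith

end DimStarAux
end Aux

open scoped ENNReal NNReal Topology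

/-- For a Radon probability measure on `ℝ^d`, the lower Hausdorff dimension equals the
infimum of Hausdorff dimensions of Borel sets of positive measure. -/
theorem dimStar_eq_inf_dimH {d : ℕ} (μ : Measure (EuclideanSpace ℝ (Fin d)))
    [IsProbabilityMeasure μ] [μ.InnerRegular] [IsFiniteMeasureOnCompacts μ] :
    dimStar μ = sInf {s : ℝ | ∃ A : Set (EuclideanSpace ℝ (Fin d)),
      MeasurableSet A ∧ 0 < μ A ∧ (dimH A).toReal = s} := by
  classical
  set S : Set ℝ := {s : ℝ | ∀ᵐ x ∂μ, s ≤ lowerLocalDim μ x} with hSdef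
  set D' : Set ℝ := {s : ℝ | ∃ A : Set (EuclideanSpace ℝ (Fin d)),
      MeasurableSet A ∧ 0 < μ A ∧ (dimH A).toReal = s} with hDdef
  have hS0 : (0:ℝ) ∈ S := ae_of_all _ fun x => DimStarAux.lld_nonneg μ x
  have hSb : BddAbove S := ⟨(dimH (univ : Set (EuclideanSpace ℝ (Fin d)))).toReal,
    fun s hs => DimStarAux.partA μ hs MeasurableSet.univ (by simp)⟩
  have hDb : BddBelow D' := ⟨0, by rintro t ⟨A, _, _, rfl⟩; exact ENNReal.toReal_nonneg⟩
  have hDne : D'.Nonempty := ⟨_, ⟨univ, MeasurableSet.univ, by simp, rfl⟩⟩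
  have hgoal : dimStar μ = sSup S := by rw [dimStar, hSdef]
  rw [hgoal]
  apply le_antisymm
  · refine le_csInf hDne ?_
    rintro t ⟨A, hA, hpos, rfl⟩
    exact csSup_le ⟨0, hS0⟩ fun s hs => DimStarAux.partA μ hs hA hpos
  · apply le_of_forall_pos_le_add
    intro ε hε
    set s₁ : ℝ := sSup S + ε/3 with hs₁def
    set s₂ : ℝ := sSup S + ε/2 with hs₂def
    have hSup0 : 0 ≤ sSup S := le_csSup hSb hS0
    have hs₁pos : 0 < s₁ := by rw [hs₁def]; linarith
    have hs₂pos : 0 < s₂ := by rw [hs₂def]; linarith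
    have hs₁₂ : s₁ < s₂ := by rw [hs₁def, hs₂def]; linarith
    have hs₁S : s₁ ∉ S := fun h => absurd (le_csSup hSb h) (by rw [hs₁def]; linarith)
    have hT : μ {x | ¬ s₁ ≤ lowerLocalDim μ x} ≠ 0 := fun h0 => hs₁S (ae_iff.2 h0)
    -- the null set Z of points with a null ball around them
    set Z : Set (EuclideanSpace ℝ (Fin d)) :=
      {x | ∃ r > (0:ℝ), μ (Metric.ball x r) = 0} with hZdef
    have hZ : μ Z = 0 := by
      apply measure_null_of_locally_null
      rintro x ⟨r, hr, h0⟩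
      exact ⟨Metric.ball x r, mem_nhdsWithin_of_mem_nhds (Metric.ball_mem_nhds x hr), h0⟩
    -- the null set W of "extremely thin" points
    set W : Set (EuclideanSpace ℝ (Fin d)) :=
      {x | ∀ᶠ r in nhdsWithin (0:ℝ) (Ioi 0),
        μ (Metric.ball x r) ≤ ENNReal.ofReal (r ^ ((d:ℝ)+1))} with hWdef
    have hW : μ W = 0 := by
      have hsub : W ⊆ ⋃ n : ℕ, DimStarAux.good μ ((d:ℝ)+1) n := fun x hx =>
        mem_iUnion.2 (DimStarAux.mem_good_of_eventually μ hx)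
      refine measure_mono_null hsub (measure_iUnion_null fun n => ?_)
      have hmass := DimStarAux.mass_distribution μ (by positivity : (0:ℝ) < (d:ℝ)+1)
        (DimStarAux.measurable_good μ ((d:ℝ)+1) n) n (fun x hx q h1 h2 => hx q h1 h2)
      have hzero : μH[(d:ℝ)+1] (DimStarAux.good μ ((d:ℝ)+1) n) = 0 := by
        rw [Real.hausdorffMeasure_of_finrank_lt
          (by rw [finrank_euclideanSpace_fin]; exact lt_add_one (d:ℝ))]
        rfl
      rw [hzero, mul_zero] at hmass
      exact le_antisymm hmass zero_le
    -- the measurable set A of points with frequent mass lower bounds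
    set A : Set (EuclideanSpace ℝ (Fin d)) :=
      {x | ∀ n : ℕ, ∃ q : ℚ, 0 < (q:ℝ) ∧ (q:ℝ) < 1/(n+1) ∧
        ENNReal.ofReal ((q:ℝ) ^ s₂) ≤ μ (Metric.ball x (q:ℝ))} with hAdef
    have hAmeas : MeasurableSet A := by
      have hArep : A = ⋂ n : ℕ, ⋃ q : ℚ, ⋃ (_ : 0 < (q:ℝ)), ⋃ (_ : (q:ℝ) < 1/(n+1)),
          {x : EuclideanSpace ℝ (Fin d) |
            ENNReal.ofReal ((q:ℝ) ^ s₂) ≤ μ (Metric.ball x (q:ℝ))} := by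
        ext x
        simp only [hAdef, mem_setOf_eq, mem_iInter, mem_iUnion]
        constructor
        · intro h n; obtain ⟨q, h1, h2, h3⟩ := h n; exact ⟨q, h1, h2, h3⟩
        · intro h n; obtain ⟨q, h1, h2, h3⟩ := h n; exact ⟨q, h1, h2, h3⟩
      rw [hArep]
      exact MeasurableSet.iInter fun n => MeasurableSet.iUnion fun q =>
        MeasurableSet.iUnion fun _ => MeasurableSet.iUnion fun _ =>
        DimStarAux.measurable_measure_ball' μ _ measurableSet_Ici
    have hTsub : {x | ¬ s₁ ≤ lowerLocalDim μ x} ⊆ A ∪ (W ∪ Z) := by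
      intro x hx
      by_cases hxZ : x ∈ Z
      · exact Or.inr (Or.inr hxZ)
      by_cases hxW : x ∈ W
      · exact Or.inr (Or.inl hxW)
      left
      have hfreq : ∃ᶠ r in nhdsWithin (0:ℝ) (Ioi 0), DimStarAux.f μ x r < s₁ := by
        by_contra hcontra
        rw [not_frequently] at hcontra
        have hmem : s₁ ∈ DimStarAux.L μ x := by
          filter_upwards [hcontra] with r hr
          exact not_lt.1 hr
        by_cases hb : BddAbove (DimStarAux.L μ x)
        · exact hx (DimStarAux.le_lld_of_mem_L μ x hb hmem)
        · obtain ⟨a, ha, hda⟩ := not_bddAbove_iff.1 hb ((d:ℝ)+1)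
          apply hxW
          rw [hWdef]
          filter_upwards [ha, DimStarAux.eventually_basic μ x] with r har hbasic
          exact DimStarAux.ball_le_rpow μ x hbasic.1 (le_trans hda.le har)
      intro n
      have hδ : Ioo (0:ℝ) (min (1/(n+1)) 1) ∈ nhdsWithin (0:ℝ) (Ioi 0) :=
        Ioo_mem_nhdsGT (by positivity)
      obtain ⟨r, hr1, hr2⟩ :=
        (hfreq.and_eventually (eventually_of_mem hδ fun r hr => hr)).exists
      have hr0 : 0 < r := hr2.1
      have hrn : r < 1/(n+1) := lt_of_lt_of_le hr2.2 (min_le_left _ _)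
      have hr1' : r < 1 := lt_of_lt_of_le hr2.2 (min_le_right _ _)
      have hμpos : μ (Metric.ball x r) ≠ 0 := fun h0 => hxZ ⟨r, hr0, h0⟩
      set m := (μ (Metric.ball x r)).toReal with hmdef
      have hmpos : 0 < m := ENNReal.toReal_pos hμpos (measure_ne_top μ _)
      have hlogr : Real.log r < 0 := Real.log_neg hr0 hr1'
      have hgt : r ^ s₁ < m := by
        have h1 : s₁ * Real.log r < Real.log m := by
          have := (div_lt_iff_of_neg hlogr).1 hr1
          linarith [this]
        calc r ^ s₁ = Real.exp (Real.log r * s₁) := Real.rpow_def_of_pos hr0 s₁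
          _ < Real.exp (Real.log m) := Real.exp_lt_exp.2 (by linarith [h1])
          _ = m := Real.exp_log hmpos
      have hrr : r < r ^ (s₁/s₂) := by
        have hlt : s₁/s₂ < 1 := (div_lt_one hs₂pos).2 hs₁₂
        have := Real.rpow_lt_rpow_of_exponent_gt hr0 hr1' hlt
        rwa [Real.rpow_one] at this
      obtain ⟨q, hq1, hq2⟩ := exists_rat_btwn (lt_min hrn hrr)
      have hqpos : 0 < (q:ℝ) := hr0.trans hq1
      refine ⟨q, hqpos, lt_of_lt_of_le hq2 (min_le_left _ _), ?_⟩
      have hqr : (q:ℝ) ≤ r ^ (s₁/s₂) := le_of_lt (lt_of_lt_of_le hq2 (min_le_right _ _))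
      have hqs : (q:ℝ) ^ s₂ ≤ r ^ s₁ := by
        calc (q:ℝ) ^ s₂ ≤ (r ^ (s₁/s₂)) ^ s₂ :=
              Real.rpow_le_rpow hqpos.le hqr hs₂pos.le
          _ = r ^ s₁ := by
              rw [← Real.rpow_mul hr0.le, div_mul_cancel₀ _ hs₂pos.ne']
      calc ENNReal.ofReal ((q:ℝ) ^ s₂) ≤ ENNReal.ofReal m :=
            ENNReal.ofReal_le_ofReal (le_of_lt (lt_of_le_of_lt hqs hgt))
        _ = μ (Metric.ball x r) := ENNReal.ofReal_toReal (measure_ne_top μ _)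
        _ ≤ μ (Metric.ball x (q:ℝ)) := measure_mono (Metric.ball_subset_ball hq1.le)
    have hApos : 0 < μ A := by
      rcases eq_or_lt_of_le (zero_le : 0 ≤ μ A) with h0 | h0
      · exfalso
        apply hT
        have h1 : μ {x | ¬ s₁ ≤ lowerLocalDim μ x} ≤ μ A + (μ W + μ Z) :=
          le_trans (measure_mono hTsub)
            (le_trans (measure_union_le _ _) (by gcongr; exact measure_union_le _ _))
        rw [← h0, hW, hZ] at h1
        exact le_antisymm (by simpa using h1) zero_le
      · exact h0
    have hdimA : dimH A ≤ ENNReal.ofReal s₂ :=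
      DimStarAux.dimH_le_of_freq μ hs₂pos (fun x hx n => hx n)
    have ht0 : (dimH A).toReal ≤ s₂ := by
      have := ENNReal.toReal_mono ENNReal.ofReal_ne_top hdimA
      rwa [ENNReal.toReal_ofReal hs₂pos.le] at this
    calc sInf D' ≤ (dimH A).toReal := csInf_le hDb ⟨A, hAmeas, hApos, rfl⟩
      _ ≤ s₂ := ht0
      _ ≤ sSup S + ε := by rw [hs₂def]; linarith
end

section
/- Let B be a finite set of algebraic real numbers. Then there exists δ = δ(B) > 0 such that for every k and every x expressible as a polynomial expression of degree at most k in the elements of B with integer coefficients of bounded height (specifically, every x ∈ P_k(B), the set of values of polynomials with integer coefficients bounded by some fixed constant, of degree ≤ k, evaluated at elements of B), either x = 0 or |x| ≥ δ^k. -/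
open Finset

/-- The support of a polynomial of total degree at most `k` has at most `(k+1)^n`
elements. -/
lemma support_card_le_aux {ι : Type*} [Fintype ι] (P : MvPolynomial ι ℤ) (k : ℕ)
    (h : P.totalDegree ≤ k) : P.support.card ≤ (k + 1) ^ Fintype.card ι := by
  classical
  have hbd : ∀ m ∈ P.support, ∀ i, m i ≤ k := by
    intro m hm i
    have h1 : m i ≤ m.sum fun _ e => e := by
      by_cases hi : i ∈ m.support
      · exact Finset.single_le_sum (f := fun j => m j) (fun j _ => Nat.zero_le _) hi
      · simp [Finsupp.notMem_support_iff.mp hi]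
    exact h1.trans ((MvPolynomial.le_totalDegree hm).trans h)
  have hinj : Set.InjOn (fun (m : ι →₀ ℕ) (i : ι) =>
      (⟨min (m i) k, Nat.lt_succ_of_le (min_le_right _ _)⟩ : Fin (k + 1)))
      P.support := by
    intro m hm m' hm' hfe
    ext i
    have h2 : min (m i) k = min (m' i) k := congrArg Fin.val (congrFun hfe i)
    rwa [min_eq_left (hbd m hm i), min_eq_left (hbd m' hm' i)] at h2
  calc P.support.card
      ≤ (Finset.univ : Finset (ι → Fin (k + 1))).card :=
        Finset.card_le_card_of_injOn _ (fun m _ => Finset.mem_univ _) hinj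
    _ = (k + 1) ^ Fintype.card ι := by
        rw [Finset.card_univ, Fintype.card_fun, Fintype.card_fin]

/-- bound on the absolute value of an evaluation of an integer polynomial at complex
numbers of absolute value at most `M`. -/
lemma aeval_abs_le_aux {ι : Type*} [Fintype ι] (g : ι → ℂ) (M : ℝ) (hM : 1 ≤ M)
    (hg : ∀ i, ‖g i‖ ≤ M) (C : ℤ) (k : ℕ) (P : MvPolynomial ι ℤ)
    (hdeg : P.totalDegree ≤ k) (hcoeff : ∀ m, |P.coeff m| ≤ C) :
    ‖MvPolynomial.aeval g P‖
      ≤ ((k + 1) ^ Fintype.card ι : ℕ) * (C : ℝ) * M ^ k := by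
  classical
  have hC0 : (0 : ℤ) ≤ C := le_trans (abs_nonneg _) (hcoeff 0)
  rw [MvPolynomial.aeval_def, MvPolynomial.eval₂_eq]
  refine le_trans (norm_sum_le _ _) ?_
  have hterm : ∀ m ∈ P.support,
      ‖(algebraMap ℤ ℂ) (P.coeff m) * ∏ i ∈ m.support, g i ^ m i‖
        ≤ (C : ℝ) * M ^ k := by
    intro m hm
    rw [norm_mul, norm_prod]
    have h1 : ‖(algebraMap ℤ ℂ) (P.coeff m)‖ ≤ (C : ℝ) := by
      rw [algebraMap_int_eq, eq_intCast, Complex.norm_intCast]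
      exact_mod_cast hcoeff m
    have h2 : ∏ i ∈ m.support, ‖g i ^ m i‖ ≤ M ^ k := by
      calc ∏ i ∈ m.support, ‖g i ^ m i‖
          ≤ ∏ i ∈ m.support, M ^ m i := by
            refine Finset.prod_le_prod (fun i _ => by positivity) (fun i _ => ?_)
            rw [norm_pow]
            exact pow_le_pow_left₀ (norm_nonneg _) (hg i) _
        _ = M ^ (m.sum fun _ e => e) := by
            rw [Finset.prod_pow_eq_pow_sum]; rfl
        _ ≤ M ^ k := pow_le_pow_right₀ hM ((MvPolynomial.le_totalDegree hm).trans hdeg)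
    exact mul_le_mul h1 h2 (Finset.prod_nonneg fun i _ => norm_nonneg _)
      (by exact_mod_cast hC0)
  calc ∑ m ∈ P.support,
        ‖(algebraMap ℤ ℂ) (P.coeff m) * ∏ i ∈ m.support, g i ^ m i‖
      ≤ P.support.card • ((C : ℝ) * M ^ k) := Finset.sum_le_card_nsmul _ _ _ hterm
    _ = (P.support.card : ℝ) * ((C : ℝ) * M ^ k) := nsmul_eq_mul _ _
    _ ≤ ((k + 1) ^ Fintype.card ι : ℕ) * ((C : ℝ) * M ^ k) := by
        have h3 : (P.support.card : ℝ) ≤ ((k + 1) ^ Fintype.card ι : ℕ) := by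
          exact_mod_cast support_card_le_aux P k hdeg
        have h4 : (0 : ℝ) ≤ (C : ℝ) * M ^ k := by
          have : (0:ℝ) ≤ (C:ℝ) := by exact_mod_cast hC0
          positivity
        exact mul_le_mul_of_nonneg_right h3 h4
    _ = ((k + 1) ^ Fintype.card ι : ℕ) * (C : ℝ) * M ^ k := by ring

private lemma one_le_mul3 {a b c : ℝ} (ha : 1 ≤ a) (hb : 1 ≤ b) (hc : 1 ≤ c) :
    1 ≤ a * b * c := by
  have h1 : (1:ℝ) * 1 ≤ a * b := mul_le_mul ha hb zero_le_one (zero_le_one.trans ha)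
  have h2 : (1:ℝ) * 1 ≤ (a * b) * c :=
    mul_le_mul (by linarith) hc zero_le_one (by linarith)
  linarith

set_option maxHeartbeats 2000000 in
/-- Hochman's algebraic separation lemma: if `B` is a finite set of algebraic real
numbers, then there is `δ = δ(B) > 0` such that any value of a polynomial expression
in the elements of `B` of degree at most `k`, with integer coefficients bounded in
absolute value by a fixed constant, is either `0` or at least `δ^k` in absolute
value. -/
theorem algebraic_polynomial_separation
    {ι : Type*} [Fintype ι] (b : ι → ℝ) (halg : ∀ i, IsAlgebraic ℚ (b i))
    (C : ℤ) (hC : 0 < C) :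
    ∃ δ : ℝ, 0 < δ ∧ ∀ (k : ℕ) (P : MvPolynomial ι ℤ),
      P.totalDegree ≤ k → (∀ m, |P.coeff m| ≤ C) →
      MvPolynomial.aeval b P = 0 ∨ δ ^ k ≤ |MvPolynomial.aeval b P| := by
  classical
  haveI : Finite ↥(Set.range b) := (Set.finite_range b).to_subtype
  set K := IntermediateField.adjoin ℚ (Set.range b) with hKdef
  haveI : FiniteDimensional ℚ K :=
    IntermediateField.finiteDimensional_adjoin fun x hx => by
      obtain ⟨i, rfl⟩ := hx; exact (halg i).isIntegral
  haveI : CharZero K := charZero_of_injective_algebraMap (algebraMap ℚ K).injective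
  set b' : ι → K := fun i =>
    ⟨b i, IntermediateField.subset_adjoin ℚ _ ⟨i, rfl⟩⟩ with hb'def
  -- denominators
  have hden : ∀ i, ∃ D : ℕ, 0 < D ∧ IsIntegral ℤ ((D : K) * b' i) := by
    intro i
    have halg' : IsAlgebraic ℤ (b' i) := by
      rw [IsFractionRing.isAlgebraic_iff ℤ ℚ K]
      exact (IsIntegral.of_finite ℚ (b' i)).isAlgebraic
    have hinj : ∀ z : ℤ, algebraMap ℤ K z = 0 → z = 0 := by
      intro z hz
      rw [algebraMap_int_eq, eq_intCast, Int.cast_eq_zero] at hz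
      exact hz
    obtain ⟨y, hy, hxy⟩ := halg'.exists_integral_multiple
    have hxint : IsIntegral ℤ (algebraMap ℤ K y * b' i) := by rwa [Algebra.smul_def] at hxy
    refine ⟨y.natAbs, Int.natAbs_pos.mpr hy, ?_⟩
    have hcast : ((y.natAbs : ℕ) : K) = ((y.natAbs : ℤ) : K) := (Int.cast_natCast _).symm
    rw [algebraMap_int_eq, eq_intCast] at hxint
    rcases Int.natAbs_eq y with h | h
    · rw [hcast, ← h]; exact hxint
    · have habs : ((y.natAbs : ℤ)) = -y := by omega
      rw [hcast, habs, Int.cast_neg, neg_mul]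
      exact hxint.neg
  choose D hDpos hDint using hden
  set N : ℕ := ∏ i, D i with hNdef
  have hNpos : 0 < N := Finset.prod_pos fun i _ => hDpos i
  have hNK : ∀ i, IsIntegral ℤ ((N : K) * b' i) := by
    intro i
    have hNsplit : (∏ j ∈ Finset.univ.erase i, D j) * D i = N :=
      Finset.prod_erase_mul Finset.univ D (Finset.mem_univ i)
    have hint1 : IsIntegral ℤ (((∏ j ∈ Finset.univ.erase i, D j : ℕ) : K)) := by
      have := isIntegral_algebraMap (R := ℤ) (A := K)
        (x := ((∏ j ∈ Finset.univ.erase i, D j : ℕ) : ℤ))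
      rwa [algebraMap_int_eq, eq_intCast, Int.cast_natCast] at this
    have heq : (N : K) * b' i
        = ((∏ j ∈ Finset.univ.erase i, D j : ℕ) : K) * (((D i : ℕ) : K) * b' i) := by
      rw [← mul_assoc, ← Nat.cast_mul, hNsplit]
    rw [heq]
    exact hint1.mul (hDint i)
  -- bound on embeddings of the generators
  have hfinr : (Set.range fun p : (K →ₐ[ℚ] ℂ) × ι =>
      ‖p.1 (b' p.2)‖).Finite := Set.finite_range _
  obtain ⟨M₀, hM₀⟩ := hfinr.bddAbove
  set M : ℝ := max M₀ 1 with hMdef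
  have hM1 : 1 ≤ M := le_max_right _ _
  have hM0 : 0 ≤ M := le_trans zero_le_one hM1
  have hMb : ∀ (σ : K →ₐ[ℚ] ℂ) (i : ι), ‖σ (b' i)‖ ≤ M := by
    intro σ i
    exact le_max_of_le_left (hM₀ ⟨(σ, i), rfl⟩)
  set n : ℕ := Fintype.card ι with hndef
  set d : ℕ := Fintype.card (K →ₐ[ℚ] ℂ) with hddef
  set E : ℝ := 2 ^ n * N * M with hEdef
  have hN1 : (1 : ℝ) ≤ (N : ℝ) := by exact_mod_cast hNpos
  have hC1 : (1 : ℝ) ≤ (C : ℝ) := by exact_mod_cast hC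
  have hE1 : 1 ≤ E := by
    have h2 : (1 : ℝ) ≤ 2 ^ n := one_le_pow₀ (by norm_num : (1:ℝ) ≤ 2)
    rw [hEdef]
    exact one_le_mul3 h2 hN1 hM1
  set A : ℝ := N * ((C : ℝ) * E) ^ d with hAdef
  have hA1 : 1 ≤ A := by
    have h5 : (1 : ℝ) ≤ ((C : ℝ) * E) ^ d :=
      one_le_pow₀ (by nlinarith)
    rw [hAdef]
    have := one_le_mul3 hN1 h5 le_rfl
    linarith [this]
  have hA0 : 0 < A := lt_of_lt_of_le one_pos hA1
  refine ⟨A⁻¹, inv_pos.mpr hA0, ?_⟩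
  intro k P hdeg hcoeff
  by_cases hzero : MvPolynomial.aeval b P = 0
  · exact Or.inl hzero
  right
  -- the element in K
  set x : K := MvPolynomial.aeval b' P with hxdef
  have hxR : MvPolynomial.aeval b P = (x : ℝ) := by
    rw [hxdef]
    exact (MvPolynomial.comp_aeval_apply (R := ℤ) (f := b')
      ((algebraMap K ℝ).toIntAlgHom) P).symm
  have hxK : x ≠ 0 := by
    intro h
    apply hzero
    rw [hxR, h]; simp
  rcases Nat.eq_zero_or_pos k with hk0 | hk
  · -- degree zero: the value is a nonzero integer
    subst hk0
    have hdeg0 : P.totalDegree = 0 := Nat.le_zero.mp hdeg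
    have hP0 : ∀ m ∈ P.support, m = 0 := by
      intro m hm
      ext i
      exact (MvPolynomial.totalDegree_eq_zero_iff ι P).mp hdeg0 m hm i
    have hval : MvPolynomial.aeval b P = ((P.coeff 0 : ℤ) : ℝ) := by
      rw [MvPolynomial.aeval_def, MvPolynomial.eval₂_eq]
      have hsub : P.support ⊆ {0} := fun m hm => Finset.mem_singleton.mpr (hP0 m hm)
      have h0 : ∀ m ∈ ({0} : Finset (ι →₀ ℕ)), m ∉ P.support →
          (algebraMap ℤ ℝ) (P.coeff m) * ∏ i ∈ m.support, b i ^ m i = 0 := by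
        intro m _ hnm
        rw [MvPolynomial.notMem_support_iff.mp hnm]
        simp
      rw [Finset.sum_subset hsub h0, Finset.sum_singleton]
      simp
    have hc0 : P.coeff 0 ≠ 0 := by
      intro h
      apply hzero
      rw [hval, h]; simp
    rw [pow_zero, hval]
    rw [← Int.cast_abs]
    exact_mod_cast Int.one_le_abs hc0
  -- main case : k ≥ 1
  set y : K := (N : K) ^ k * x with hydef
  have hy0 : y ≠ 0 :=
    mul_ne_zero (pow_ne_zero _ (Nat.cast_ne_zero.mpr hNpos.ne')) hxK
  -- y is an algebraic integer
  have hyInt : IsIntegral ℤ y := by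
    have hNint : IsIntegral ℤ ((N : K)) := by
      have := isIntegral_algebraMap (R := ℤ) (A := K) (x := ((N : ℕ) : ℤ))
      rwa [algebraMap_int_eq, eq_intCast, Int.cast_natCast] at this
    have hxexp : x = ∑ m ∈ P.support,
        (algebraMap ℤ K) (P.coeff m) * ∏ i ∈ m.support, b' i ^ m i := by
      rw [hxdef, MvPolynomial.aeval_def, MvPolynomial.eval₂_eq]
    rw [hydef, hxexp, Finset.mul_sum]
    refine IsIntegral.sum _ (fun m hm => ?_)
    have hdm : (m.sum fun _ e => e) ≤ k :=
      (MvPolynomial.le_totalDegree hm).trans hdeg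
    have key : (N : K) ^ k * ∏ i ∈ m.support, b' i ^ m i
        = (N : K) ^ (k - (m.sum fun _ e => e))
          * ∏ i ∈ m.support, ((N : K) * b' i) ^ m i := by
      have h1 : ∏ i ∈ m.support, ((N : K) * b' i) ^ m i
          = (N : K) ^ (m.sum fun _ e => e) * ∏ i ∈ m.support, b' i ^ m i := by
        simp only [mul_pow]
        rw [Finset.prod_mul_distrib, Finset.prod_pow_eq_pow_sum]
        rfl
      rw [h1, ← mul_assoc, ← pow_add, Nat.sub_add_cancel hdm]
    have hintc : IsIntegral ℤ ((algebraMap ℤ K) (P.coeff m)) := isIntegral_algebraMap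
    rw [show (N : K) ^ k * ((algebraMap ℤ K) (P.coeff m) * ∏ i ∈ m.support, b' i ^ m i)
        = (algebraMap ℤ K) (P.coeff m)
          * ((N : K) ^ k * ∏ i ∈ m.support, b' i ^ m i) by ring, key]
    exact hintc.mul ((hNint.pow _).mul
      (IsIntegral.prod _ fun i _ => (hNK i).pow _))
  -- bound on the conjugates of y
  set S : ℝ := (N : ℝ) ^ k * (((k + 1) ^ n : ℕ) * (C : ℝ) * M ^ k) with hSdef
  have hS1 : 1 ≤ S := by
    have h1 : (1 : ℝ) ≤ (N : ℝ) ^ k := one_le_pow₀ hN1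
    have h2 : (1 : ℝ) ≤ (((k + 1) ^ n : ℕ) : ℝ) := by
      exact_mod_cast Nat.one_le_iff_ne_zero.mpr (pow_ne_zero _ (Nat.succ_ne_zero k))
    have h3 : (1 : ℝ) ≤ M ^ k := one_le_pow₀ hM1
    have h12 : (1 : ℝ) ≤ (((k + 1) ^ n : ℕ) : ℝ) * (C : ℝ) := by nlinarith
    have h := one_le_mul3 h1 h12 h3
    rw [hSdef]
    calc (1:ℝ) ≤ (N:ℝ) ^ k * ((((k+1)^n : ℕ) : ℝ) * (C:ℝ)) * M ^ k := h
      _ = (N:ℝ) ^ k * ((((k+1)^n : ℕ) : ℝ) * (C:ℝ) * M ^ k) := by ring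
  have hσy : ∀ σ : K →ₐ[ℚ] ℂ, ‖σ y‖ ≤ S := by
    intro σ
    have hmap : σ y = (N : ℂ) ^ k * MvPolynomial.aeval (fun i => σ (b' i)) P := by
      rw [hydef, map_mul, map_pow, map_natCast]
      congr 1
      exact MvPolynomial.comp_aeval_apply (R := ℤ) (f := b')
        (σ.toRingHom.toIntAlgHom) P
    rw [hmap, norm_mul, norm_pow, Complex.norm_natCast]
    have hb1 := aeval_abs_le_aux (fun i => σ (b' i)) M hM1 (fun i => hMb σ i)
      C k P hdeg hcoeff
    rw [hSdef]
    have hNk : (0:ℝ) ≤ (N:ℝ) ^ k := by positivity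
    exact mul_le_mul_of_nonneg_left hb1 hNk
  -- norm of y is at least 1
  have hnorm1 : (1 : ℝ) ≤ ∏ σ : K →ₐ[ℚ] ℂ, ‖σ y‖ := by
    have h1 : algebraMap ℚ ℂ (Algebra.norm ℚ y) = ∏ σ : K →ₐ[ℚ] ℂ, σ y :=
      Algebra.norm_eq_prod_embeddings ℚ ℂ y
    obtain ⟨z, hz⟩ := IsIntegrallyClosed.isIntegral_iff.mp
      (Algebra.isIntegral_norm ℚ hyInt)
    have hz0 : z ≠ 0 := by
      intro h0
      have hn0 : Algebra.norm ℚ y = 0 := by rw [← hz, h0]; simp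
      exact (Algebra.norm_ne_zero_iff (R := ℚ)).mpr hy0 hn0
    calc (1 : ℝ) ≤ |(z : ℝ)| := by
          rw [← Int.cast_abs]; exact_mod_cast Int.one_le_abs hz0
      _ = ‖algebraMap ℚ ℂ (Algebra.norm ℚ y)‖ := by
          rw [← hz]
          simp only [eq_intCast, eq_ratCast, Rat.cast_intCast, Complex.norm_intCast]
      _ = ∏ σ : K →ₐ[ℚ] ℂ, ‖σ y‖ := by rw [h1, norm_prod]
  -- the distinguished real embedding
  set σ₀ : K →ₐ[ℚ] ℂ := (Complex.ofRealAm.restrictScalars ℚ).comp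
    (IntermediateField.val K) with hσ₀def
  have hσ₀y : ‖σ₀ y‖ = |((y : K) : ℝ)| := by
    rw [hσ₀def]
    exact (Complex.norm_real _).trans (Real.norm_eq_abs _)
  -- assemble
  haveI : DecidableEq (K →ₐ[ℚ] ℂ) := Classical.decEq _
  have hprod : ∏ σ : K →ₐ[ℚ] ℂ, ‖σ y‖ ≤ |((y : K) : ℝ)| * S ^ d := by
    rw [← Finset.mul_prod_erase Finset.univ _ (Finset.mem_univ σ₀), hσ₀y]
    have h2 : ∏ σ ∈ Finset.univ.erase σ₀, ‖σ y‖
        ≤ S ^ (Finset.univ.erase σ₀).card := by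
      rw [← Finset.prod_const]
      exact Finset.prod_le_prod (fun σ _ => norm_nonneg _)
        (fun σ _ => hσy σ)
    have h3 : S ^ (Finset.univ.erase σ₀).card ≤ S ^ d :=
      pow_le_pow_right₀ hS1 (le_trans (Finset.card_erase_le) (by rw [hddef, Finset.card_univ]))
    exact mul_le_mul_of_nonneg_left (h2.trans h3) (abs_nonneg _)
  have hyR : ((y : K) : ℝ) = (N : ℝ) ^ k * ((x : K) : ℝ) := by
    rw [hydef]; push_cast; ring
  have hmain : (1 : ℝ) ≤ |((x : K) : ℝ)| * ((N : ℝ) ^ k * S ^ d) := by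
    have := hnorm1.trans hprod
    rw [hyR, abs_mul, abs_of_nonneg (by positivity : (0:ℝ) ≤ (N:ℝ) ^ k)] at this
    linarith [this]
  -- compare S with C * E ^ k
  have hSE : S ≤ (C : ℝ) * E ^ k := by
    have hkk : ((k : ℝ) + 1) ≤ 2 ^ k := by
      exact_mod_cast (show k < 2 ^ k by exact Nat.lt_two_pow_self)
    have h1 : (((k + 1) ^ n : ℕ) : ℝ) ≤ (2 ^ n : ℝ) ^ k := by
      push_cast
      calc ((k + 1 : ℝ)) ^ n ≤ ((2:ℝ) ^ k) ^ n :=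
            pow_le_pow_left₀ (by positivity) hkk n
        _ = ((2:ℝ) ^ n) ^ k := by rw [← pow_mul, ← pow_mul, Nat.mul_comm]
    have hEk : E ^ k = (2 ^ n : ℝ) ^ k * (N : ℝ) ^ k * M ^ k := by
      rw [hEdef]; rw [mul_pow, mul_pow]
    rw [hSdef, hEk]
    have hC0 : (0:ℝ) ≤ (C:ℝ) := by linarith
    have hfac : (0:ℝ) ≤ (N:ℝ) ^ k * ((C:ℝ) * M ^ k) :=
      mul_nonneg (by positivity) (mul_nonneg hC0 (by positivity))
    calc (N:ℝ) ^ k * ((((k+1)^n : ℕ) : ℝ) * (C:ℝ) * M ^ k)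
        = (((k+1)^n : ℕ) : ℝ) * ((N:ℝ) ^ k * ((C:ℝ) * M ^ k)) := by ring
      _ ≤ (2 ^ n : ℝ) ^ k * ((N:ℝ) ^ k * ((C:ℝ) * M ^ k)) :=
          mul_le_mul_of_nonneg_right h1 hfac
      _ = (C:ℝ) * ((2 ^ n : ℝ) ^ k * (N:ℝ) ^ k * M ^ k) := by ring
  -- compare N^k * (C E^k)^d with A^k
  have hfin : (N : ℝ) ^ k * S ^ d ≤ A ^ k := by
    have h1 : S ^ d ≤ ((C : ℝ) * E ^ k) ^ d :=
      pow_le_pow_left₀ (le_trans zero_le_one hS1) hSE d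
    have h2 : ((C : ℝ) * E ^ k) ^ d ≤ ((C : ℝ) * E) ^ (d * k) := by
      rw [show ((C : ℝ) * E) ^ (d * k) = (((C : ℝ) * E) ^ k) ^ d by
        rw [mul_comm d k, pow_mul]]
      refine pow_le_pow_left₀ (by positivity) ?_ d
      rw [mul_pow (C : ℝ) E k]
      have hCk : (C : ℝ) ≤ (C : ℝ) ^ k := le_self_pow₀ hC1 hk.ne'
      have hEk0 : (0:ℝ) ≤ E ^ k := by positivity
      exact mul_le_mul_of_nonneg_right hCk hEk0
    have h3 : ((C : ℝ) * E) ^ (d * k) = (((C : ℝ) * E) ^ d) ^ k := by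
      rw [← pow_mul]
    have h4 : A ^ k = (N : ℝ) ^ k * (((C : ℝ) * E) ^ d) ^ k := by
      rw [hAdef, mul_pow]
    rw [h4]
    have hNk : (0:ℝ) ≤ (N:ℝ) ^ k := by positivity
    calc (N : ℝ) ^ k * S ^ d ≤ (N : ℝ) ^ k * ((C : ℝ) * E) ^ (d * k) := by
          exact mul_le_mul_of_nonneg_left (h1.trans h2) hNk
      _ = (N : ℝ) ^ k * (((C : ℝ) * E) ^ d) ^ k := by rw [h3]
  -- conclude
  have hxabs : (1 : ℝ) ≤ |((x : K) : ℝ)| * A ^ k := by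
    have h5 : |((x : K) : ℝ)| * ((N : ℝ) ^ k * S ^ d) ≤ |((x : K) : ℝ)| * A ^ k :=
      mul_le_mul_of_nonneg_left hfin (abs_nonneg _)
    linarith
  rw [hxR]
  have hAk : (0 : ℝ) < A ^ k := by positivity
  rw [inv_pow, inv_eq_one_div, div_le_iff₀ hAk]
  linarith
end
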